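/- Let z ∈ ℝⁿ with z ≠ 0 and let 0 < w ≤ ‖z‖₁. Then λ̃₃ := sup{λ ≥ 0 : ‖S(z,2λ)‖₁ ≥ w} satisfies λ̃₃ ≤ (1 - w/‖z‖₁)·‖z‖_∞/2. -/

import Mathlib

noncomputable def softTh (x t : ℝ) : ℝ := Real.sign x * max (|x| - t) 0

theorem stmt_7 (n : ℕ) (z : Fin n → ℝ) (hz : z ≠ 0) (w : ℝ) (hw : 0 < w)
    (hw1 : w ≤ ∑ k, |z k|) :
    sSup {lam : ℝ | 0 ≤ lam ∧ w ≤ ∑ k, |softTh (z k) (2 * lam)|}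
      ≤ (1 - w / ∑ k, |z k|) * (⨆ k, |z k|) / 2 := by
  set N : ℝ := ∑ k, |z k| with hNdef
  set M : ℝ := ⨆ k, |z k| with hMdef
  have hN : 0 < N := lt_of_lt_of_le hw hw1
  obtain ⟨k0, hk0⟩ : ∃ k, z k ≠ 0 := by
    by_contra h
    push_neg at h
    exact hz (funext h)
  have hkM : ∀ k, |z k| ≤ M := fun k =>
    le_ciSup (f := fun k => |z k|) (Set.Finite.bddAbove (Set.finite_range _)) k
  have hM : 0 < M := lt_of_lt_of_le (abs_pos.mpr hk0) (hkM k0)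
  have habs : ∀ x t : ℝ, 0 ≤ t → |softTh x t| ≤ max (|x| - t) 0 := by
    intro x t ht
    unfold softTh
    rw [abs_mul]
    have h1 : |Real.sign x| ≤ 1 := by
      rcases lt_trichotomy x 0 with h | h | h
      · rw [Real.sign_of_neg h]; norm_num
      · rw [h, Real.sign_zero]; norm_num
      · rw [Real.sign_of_pos h]; norm_num
    have h2 : |max (|x| - t) 0| = max (|x| - t) 0 :=
      abs_of_nonneg (le_max_right _ _)
    rw [h2]
    nlinarith [le_max_right (|x| - t) (0:ℝ), abs_nonneg (Real.sign x)]
  have hbound : (1 - w / N) * M / 2 = (N - w) * M / (2 * N) := by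
    rw [eq_div_iff (by positivity)]
    field_simp
  apply Real.sSup_le
  · rintro lam ⟨hlam0, hlamw⟩
    have hsum : w ≤ ∑ k, max (|z k| - 2 * lam) 0 := by
      refine hlamw.trans (Finset.sum_le_sum fun k _ => ?_)
      exact habs (z k) (2 * lam) (by linarith)
    have hlamM : 2 * lam ≤ M := by
      by_contra h
      push_neg at h
      have : ∑ k, max (|z k| - 2 * lam) 0 = 0 := by
        apply Finset.sum_eq_zero
        intro k _
        have := hkM k
        rw [max_eq_right]
        linarith
      linarith [hsum, this]
    have hterm : ∀ k, M * max (|z k| - 2 * lam) 0 ≤ |z k| * (M - 2 * lam) := by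
      intro k
      have hk := hkM k
      have hk0' := abs_nonneg (z k)
      rcases le_total (|z k| - 2 * lam) 0 with h | h
      · rw [max_eq_right h]
        nlinarith
      · rw [max_eq_left h]
        nlinarith
    have hsum2 : M * w ≤ N * (M - 2 * lam) := by
      calc M * w ≤ M * ∑ k, max (|z k| - 2 * lam) 0 := by
            exact mul_le_mul_of_nonneg_left hsum hM.le
        _ = ∑ k, M * max (|z k| - 2 * lam) 0 := Finset.mul_sum _ _ _
        _ ≤ ∑ k, |z k| * (M - 2 * lam) := Finset.sum_le_sum fun k _ => hterm k
        _ = N * (M - 2 * lam) := by rw [hNdef, Finset.sum_mul]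
    rw [hbound, le_div_iff₀ (by positivity)]
    nlinarith
  · rw [hbound]
    exact div_nonneg (mul_nonneg (by linarith) hM.le) (by positivity)
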